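/- Let (a_k)_{k∈ℕ} be positive reals with a_k ≥ a₀ > 0 for every k, let η > 0, 0 ≤ κ ≤ 1, and let j ≥ 1 be an integer. Then for every k, a_k^{1−κ} (1 + η a_k)^{−j} ≤ (jη)^{−(1−κ)} (1 + η a₀)^{−jκ}. Consequently, the diagonal linear operator T on H determined by T f_k = a_k^{1−κ} (1 + η a_k)^{−j} f_k is bounded with operator norm at most (jη)^{κ−1} (1 + η a₀)^{−jκ}. -/

import Mathlib

open Real

lemma scalar_bound {a a0 η κ : ℝ} (ha0 : 0 < a0) (h0a : a0 ≤ a) (hη : 0 < η)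
    (hκ0 : 0 ≤ κ) (hκ1 : κ ≤ 1) {j : ℕ} (hj : 1 ≤ j) :
    a ^ ((1 : ℝ) - κ) * (1 + η * a) ^ (-(j : ℝ))
      ≤ ((j : ℝ) * η) ^ (κ - 1) * (1 + η * a0) ^ (-((j : ℝ) * κ)) := by
  have hapos : 0 < a := ha0.trans_le h0a
  set b : ℝ := 1 + η * a with hb
  have hb1 : (1 : ℝ) ≤ b := by nlinarith
  have hbpos : 0 < b := lt_of_lt_of_le one_pos hb1
  have hjpos : (0 : ℝ) < (j : ℝ) := by exact_mod_cast Nat.pos_of_ne_zero (by omega)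
  have hjη : (0 : ℝ) < (j : ℝ) * η := mul_pos hjpos hη
  -- split the exponent
  have hsplit : b ^ (-(j : ℝ)) = b ^ (-(j : ℝ) * (1 - κ)) * b ^ (-(j : ℝ) * κ) := by
    rw [← Real.rpow_add hbpos]; ring_nf
  -- Bernoulli: j*η*a ≤ b^j
  have hBern : (j : ℝ) * η * a ≤ b ^ j := by
    have h := one_add_mul_le_pow (a := η * a) (by nlinarith) j
    nlinarith
  have hfrac : a * b ^ (-(j : ℝ)) ≤ ((j : ℝ) * η)⁻¹ := by
    have hbj : (0 : ℝ) < b ^ j := pow_pos hbpos j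
    rw [Real.rpow_neg hbpos.le, Real.rpow_natCast]
    rw [mul_inv_le_iff₀ hbj, inv_mul_eq_div, le_div_iff₀ hjη]
    nlinarith
  have h1 : a ^ ((1 : ℝ) - κ) * b ^ (-(j : ℝ) * (1 - κ)) ≤ ((j : ℝ) * η) ^ (κ - 1) := by
    have e1 : b ^ (-(j : ℝ) * (1 - κ)) = (b ^ (-(j : ℝ))) ^ ((1 : ℝ) - κ) := by
      rw [← Real.rpow_mul hbpos.le]
    rw [e1, ← Real.mul_rpow hapos.le (Real.rpow_nonneg hbpos.le _)]
    calc (a * b ^ (-(j : ℝ))) ^ ((1 : ℝ) - κ)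
        ≤ (((j : ℝ) * η)⁻¹) ^ ((1 : ℝ) - κ) := by
          exact Real.rpow_le_rpow (by positivity) hfrac (by linarith)
      _ = ((j : ℝ) * η) ^ (κ - 1) := by
          rw [← Real.rpow_neg_one ((j:ℝ)*η), ← Real.rpow_mul hjη.le]; ring_nf
  have h2 : b ^ (-(j : ℝ) * κ) ≤ (1 + η * a0) ^ (-((j : ℝ) * κ)) := by
    rw [neg_mul]
    exact Real.rpow_le_rpow_of_nonpos (by nlinarith) (by nlinarith)
      (by simp; positivity)
  calc a ^ ((1 : ℝ) - κ) * b ^ (-(j : ℝ))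
      = (a ^ ((1 : ℝ) - κ) * b ^ (-(j : ℝ) * (1 - κ))) * b ^ (-(j : ℝ) * κ) := by
        rw [hsplit]; ring
    _ ≤ ((j : ℝ) * η) ^ (κ - 1) * (1 + η * a0) ^ (-((j : ℝ) * κ)) := by
        apply mul_le_mul h1 h2 (Real.rpow_nonneg hbpos.le _) (by positivity)

/-- **Smoothing bound `‖(−A)^{1−κ} S_η^j‖ ≤ (jη)^{κ−1}(1+ηa₀)^{−jκ}`.** -/
theorem stmt9 {H : Type*} [NormedAddCommGroup H] [InnerProductSpace ℝ H] [CompleteSpace H]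
    (f : HilbertBasis ℕ ℝ H) (a : ℕ → ℝ) (ha0 : 0 < a 0) (ha : ∀ k, a 0 ≤ a k)
    (η κ : ℝ) (hη : 0 < η) (hκ0 : 0 ≤ κ) (hκ1 : κ ≤ 1) (j : ℕ) (hj : 1 ≤ j)
    (T : H →L[ℝ] H)
    (hT : ∀ k, T (f k) = (a k ^ ((1 : ℝ) - κ) * (1 + η * a k) ^ (-(j : ℝ))) • f k) :
    (∀ k, a k ^ ((1 : ℝ) - κ) * (1 + η * a k) ^ (-(j : ℝ))
        ≤ ((j : ℝ) * η) ^ (κ - 1) * (1 + η * a 0) ^ (-((j : ℝ) * κ))) ∧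
      ‖T‖ ≤ ((j : ℝ) * η) ^ (κ - 1) * (1 + η * a 0) ^ (-((j : ℝ) * κ)) := by
  set c : ℕ → ℝ := fun k => a k ^ ((1 : ℝ) - κ) * (1 + η * a k) ^ (-(j : ℝ)) with hc
  set C : ℝ := ((j : ℝ) * η) ^ (κ - 1) * (1 + η * a 0) ^ (-((j : ℝ) * κ)) with hCdef
  have hapos : ∀ k, 0 < a k := fun k => ha0.trans_le (ha k)
  have hbpos : ∀ k, 0 < 1 + η * a k := fun k => by nlinarith [hapos k, mul_pos hη (hapos k)]
  have hcnonneg : ∀ k, 0 ≤ c k := fun k => by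
    exact mul_nonneg (Real.rpow_nonneg (hapos k).le _) (Real.rpow_nonneg (hbpos k).le _)
  have hscalar : ∀ k, c k ≤ C := fun k =>
    scalar_bound ha0 (ha k) hη hκ0 hκ1 hj
  have hCpos : 0 < C := by
    have hjpos : (0 : ℝ) < (j : ℝ) := by exact_mod_cast Nat.pos_of_ne_zero (by omega)
    have : (0:ℝ) < 1 + η * a 0 := by nlinarith
    positivity
  refine ⟨hscalar, ?_⟩
  -- key: ⟪f i, T x⟫ = c i * ⟪f i, x⟫
  have hinner : ∀ (i : ℕ) (x : H), (inner ℝ (f i) (T x) : ℝ) = c i * inner ℝ (f i) x := by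
    intro i
    have := ContinuousLinearMap.ext_on (R₁ := ℝ)
      (Submodule.dense_iff_topologicalClosure_eq_top.mpr f.dense_span)
      (f := ((innerSL ℝ (f i)).comp T)) (g := (c i • innerSL ℝ (f i)))
      (by
        rintro _ ⟨n, rfl⟩
        simp only [ContinuousLinearMap.comp_apply, ContinuousLinearMap.smul_apply,
          innerSL_apply_apply, hT n, real_inner_smul_right, smul_eq_mul]
        have horth := orthonormal_iff_ite.mp f.orthonormal i n
        by_cases hin : i = n
        · subst hin; simp [horth, hc]
        · simp [horth, if_neg hin])
    intro x
    have hx := DFunLike.congr_fun this x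
    simpa using hx
  have hbound : ∀ x : H, ‖T x‖ ≤ C * ‖x‖ := by
    intro x
    have hsq : ‖T x‖ ^ 2 ≤ (C * ‖x‖) ^ 2 := by
      have hP1 : (∑' i, (inner ℝ (T x) (f i) : ℝ) * inner ℝ (f i) (T x)) = inner ℝ (T x) (T x) :=
        f.tsum_inner_mul_inner (T x) (T x)
      have hP2 : (∑' i, (inner ℝ x (f i) : ℝ) * inner ℝ (f i) x) = inner ℝ x x :=
        f.tsum_inner_mul_inner x x
      have hS1 : Summable fun i => (inner ℝ (T x) (f i) : ℝ) * inner ℝ (f i) (T x) :=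
        f.summable_inner_mul_inner (T x) (T x)
      have hS2 : Summable fun i => (inner ℝ x (f i) : ℝ) * inner ℝ (f i) x :=
        f.summable_inner_mul_inner x x
      have e1 : ∀ i, (inner ℝ (T x) (f i) : ℝ) * inner ℝ (f i) (T x)
          = (c i * inner ℝ (f i) x) ^ 2 := by
        intro i
        have hcomm : (inner ℝ (T x) (f i) : ℝ) = inner ℝ (f i) (T x) := real_inner_comm _ _
        rw [hcomm, hinner i x]; ring
      have e2 : ∀ i, (inner ℝ x (f i) : ℝ) * inner ℝ (f i) x = (inner ℝ (f i) x : ℝ) ^ 2 := by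
        intro i
        have hcomm : (inner ℝ x (f i) : ℝ) = inner ℝ (f i) x := real_inner_comm _ _
        rw [hcomm]; ring
      have hle : (∑' i, (inner ℝ (T x) (f i) : ℝ) * inner ℝ (f i) (T x))
          ≤ C ^ 2 * ∑' i, (inner ℝ x (f i) : ℝ) * inner ℝ (f i) x := by
        rw [← tsum_mul_left]
        refine Summable.tsum_le_tsum (fun i => ?_) hS1 (hS2.mul_left _)
        rw [e1 i, e2 i, mul_pow]
        have : c i ^ 2 ≤ C ^ 2 := pow_le_pow_left₀ (hcnonneg i) (hscalar i) 2
        nlinarith [sq_nonneg (inner ℝ (f i) x : ℝ)]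
      rw [hP1, hP2] at hle
      rw [real_inner_self_eq_norm_sq, real_inner_self_eq_norm_sq] at hle
      calc ‖T x‖ ^ 2 ≤ C ^ 2 * ‖x‖ ^ 2 := hle
        _ = (C * ‖x‖) ^ 2 := by ring
    have h1 : 0 ≤ C * ‖x‖ := mul_nonneg hCpos.le (norm_nonneg x)
    nlinarith [norm_nonneg (T x)]
  exact T.opNorm_le_bound hCpos.le hbound
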